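/- arXiv:1210.5881 — 2 statements merged into one kernel-verified Lean document; each statement's English description precedes it below -/
import Mathlib

section
/- For a random interval x (with mid x, spr x ∈ L²) and metric d_θ with θ > 0, the Fréchet variance σ²_x = E[d_θ²(x, E(x))] equals Var(mid x) + θ·Var(spr x), where E(x) is the Aumann expectation [E(mid x) ± E(spr x)]. -/
open MeasureTheory ProbabilityTheory

/-- The Fréchet variance of a random interval equals
`Var(mid x) + θ · Var(spr x)`. -/
theorem stmt7 {Ω : Type*} [MeasurableSpace Ω] (μ : Measure Ω) [IsProbabilityMeasure μ]
    (θ : ℝ) (hθ : 0 < θ)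
    (m s : Ω → ℝ) (hs : ∀ ω, 0 ≤ s ω)
    (hm : MemLp m 2 μ) (hsL : MemLp s 2 μ) :
    ∫ ω, ((m ω - ∫ ω', m ω' ∂μ) ^ 2 + θ * (s ω - ∫ ω', s ω' ∂μ) ^ 2) ∂μ =
      variance m μ + θ * variance s μ := by
  have him : Integrable (fun ω => (m ω - ∫ ω', m ω' ∂μ) ^ 2) μ := by
    have := (hm.sub (memLp_const (∫ ω', m ω' ∂μ))).integrable_sq
    simpa using this
  have his : Integrable (fun ω => (s ω - ∫ ω', s ω' ∂μ) ^ 2) μ := by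
    have := (hsL.sub (memLp_const (∫ ω', s ω' ∂μ))).integrable_sq
    simpa using this
  rw [integral_add him (his.const_mul θ), integral_const_mul,
    variance_eq_integral hm.aemeasurable, variance_eq_integral hsL.aemeasurable]
end

section
/- For sample data with spr x_i > 0 and |mid x_i| > 0 for all i, the pair (b,c) ∈ [0,∞)² belongs to Γ_G if and only if 0 ≤ b ≤ s₀ and 0 ≤ c ≤ min_k(−u_k b + v_k), where u_k = spr x_k/|mid x_k|, v_k = spr y_k/|mid x_k|, and s₀ = min_i spr y_i / spr x_i; consequently the boundary of Γ_G decomposes as L₁ ∪ L₂ ∪ L₃ as described. -/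
open Set Finset

/-- Description of `Γ_G`: `(b,c) ∈ Γ_G` iff `0 ≤ b ≤ s₀` and
`0 ≤ c ≤ min_k (-u_k b + v_k)`. -/
theorem stmt11 (n : ℕ) (hn : 0 < n) (midx sprx spry : Fin n → ℝ)
    (hx : ∀ i, 0 < sprx i) (hmx : ∀ i, 0 < |midx i|) (hy : ∀ i, 0 ≤ spry i)
    (b c : ℝ) :
    have : Nonempty (Fin n) := Fin.pos_iff_nonempty.mp hn
    let u : Fin n → ℝ := fun k => sprx k / |midx k|
    let v : Fin n → ℝ := fun k => spry k / |midx k|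
    let s₀ : ℝ := univ.inf' univ_nonempty (fun i => spry i / sprx i)
    ((0 ≤ b ∧ 0 ≤ c ∧ ∀ i, b * sprx i + c * |midx i| ≤ spry i) ↔
      (0 ≤ b ∧ b ≤ s₀ ∧ 0 ≤ c ∧
        c ≤ univ.inf' univ_nonempty (fun k => -u k * b + v k))) := by
  intro _ u v s₀
  constructor
  · rintro ⟨hb, hc, h⟩
    refine ⟨hb, ?_, hc, ?_⟩
    · apply Finset.le_inf'
      intro i _
      rw [le_div_iff₀ (hx i)]
      have := h i
      nlinarith [mul_nonneg hc (abs_nonneg (midx i))]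
    · apply Finset.le_inf'
      intro i _
      have hm := hmx i
      rw [show -u i * b + v i = (spry i - b * sprx i) / |midx i| by
        simp only [u, v]; have hne : midx i ≠ 0 := abs_pos.mp (hmx i); field_simp; ring, le_div_iff₀ hm]
      linarith [h i]
  · rintro ⟨hb, hs, hc, hcle⟩
    refine ⟨hb, hc, fun i => ?_⟩
    have := hcle.trans (Finset.inf'_le _ (Finset.mem_univ i))
    have hm := hmx i
    have : c * |midx i| ≤ (-u i * b + v i) * |midx i| :=
      mul_le_mul_of_nonneg_right this (abs_nonneg _)
    have he : (-u i * b + v i) * |midx i| = spry i - b * sprx i := by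
      simp only [u, v]; have hne : midx i ≠ 0 := abs_pos.mp (hmx i); field_simp; ring
    linarith [this, he ▸ this]
end
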